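/- Let 0 < a < √2 and define r_a = (√(1−a²) − (1−a²))^{1/2} if 0 < a ≤ 2√2/3, and r_a = √2 − a if 2√2/3 ≤ a < √2. Then the open disk {w ∈ ℂ : |w − a| < r_a} is contained in the region {w ∈ ℂ : |w² − 1| < 1}. -/

import Mathlib

open Real

set_option maxHeartbeats 1000000

theorem lemniscate_disk_inclusion (a : ℝ) (ha0 : 0 < a) (ha2 : a < Real.sqrt 2)
    (ra : ℝ)
    (hra : (0 < a ∧ a ≤ 2 * Real.sqrt 2 / 3 →
        ra = Real.sqrt (Real.sqrt (1 - a ^ 2) - (1 - a ^ 2))) ∧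
      (2 * Real.sqrt 2 / 3 ≤ a ∧ a < Real.sqrt 2 → ra = Real.sqrt 2 - a)) :
    {w : ℂ | ‖w - (a : ℂ)‖ < ra} ⊆ {w : ℂ | ‖w ^ 2 - 1‖ < 1} := by
  intro w hw
  simp only [Set.mem_setOf_eq] at hw ⊢
  set x := w.re with hx
  set y := w.im with hy
  have hb : Real.sqrt 2 ^ 2 = 2 := Real.sq_sqrt (by norm_num)
  have hb0 : (0:ℝ) ≤ Real.sqrt 2 := Real.sqrt_nonneg 2
  have habs0 : (0:ℝ) ≤ ‖w - (a:ℂ)‖ := norm_nonneg _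
  have hdisk : (x - a) ^ 2 + y ^ 2 < ra ^ 2 := by
    have h := pow_lt_pow_left₀ hw habs0 (two_ne_zero)
    rw [Complex.sq_norm] at h
    have hn : Complex.normSq (w - (a:ℂ)) = (x - a) ^ 2 + y ^ 2 := by
      simp [Complex.normSq_apply, Complex.sub_re, Complex.sub_im]
      ring
    rwa [hn] at h
  suffices h : (x ^ 2 - y ^ 2 - 1) ^ 2 + (2 * x * y) ^ 2 < 1 by
    have hn : Complex.normSq (w ^ 2 - 1) = (x ^ 2 - y ^ 2 - 1) ^ 2 + (2 * x * y) ^ 2 := by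
      simp [Complex.normSq_apply, pow_two, Complex.mul_re, Complex.mul_im,
        Complex.sub_re, Complex.sub_im]
      ring
    have h2 : ‖w ^ 2 - 1‖ ^ 2 < 1 := by rw [Complex.sq_norm, hn]; exact h
    nlinarith [norm_nonneg (w ^ 2 - 1)]
  rcases le_total a (2 * Real.sqrt 2 / 3) with hc | hc
  · -- case 1 : small a
    have hr := hra.1 ⟨ha0, hc⟩
    have haa : a ^ 2 < 1 := by nlinarith
    set q := Real.sqrt (1 - a ^ 2) with hqdef
    have hq0 : 0 ≤ q := Real.sqrt_nonneg _
    have hq2 : q ^ 2 = 1 - a ^ 2 := Real.sq_sqrt (by nlinarith)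
    have hq1 : q ≤ 1 := by nlinarith [sq_nonneg (q - 1)]
    have hr2 : ra ^ 2 = q - q ^ 2 := by
      rw [hr]
      rw [Real.sq_sqrt (by nlinarith : (0:ℝ) ≤ q - (1 - a ^ 2))]
      rw [hq2]
    have hD : 0 < ra ^ 2 - (x - a) ^ 2 - y ^ 2 := by linarith
    have key : (x ^ 2 - y ^ 2 - 1) ^ 2 + (2 * x * y) ^ 2 - 1 =
        -(2 * q * x - a) ^ 2 -
          (ra ^ 2 - (x - a) ^ 2 - y ^ 2) *
            (2 * (x ^ 2 + y ^ 2) + (ra ^ 2 - (x - a) ^ 2 - y ^ 2) + 2) := by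
      linear_combination (2 + ra ^ 2 + q - q ^ 2 - 2 * a ^ 2 + 4 * x * a) * hr2 +
        (-(2 * q) + q ^ 2 + a ^ 2 - 4 * x * a + 4 * x ^ 2) * hq2
    have hpos : 0 < 2 * (x ^ 2 + y ^ 2) + (ra ^ 2 - (x - a) ^ 2 - y ^ 2) + 2 := by
      nlinarith [sq_nonneg x, sq_nonneg y]
    nlinarith [sq_nonneg (2 * q * x - a), mul_pos hD hpos]
  · -- case 2 : large a
    have hr := hra.2 ⟨hc, ha2⟩
    rw [hr] at hdisk
    have hba : 0 < Real.sqrt 2 - a := by linarith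
    set b := Real.sqrt 2 with hbdef
    have hx1 : x ≤ b := by nlinarith [sq_nonneg y]
    have hx2 : 2 * a - b ≤ x := by nlinarith [sq_nonneg y]
    have hlow : 0 ≤ a * (2 * a ^ 2 - 2 * b * a + 1) := by
      apply mul_nonneg ha0.le
      nlinarith [sq_nonneg (2 * a - b)]
    have hhi : 0 ≤ 3 * a - 2 * b := by linarith
    have hD : 0 < (b - a) ^ 2 - (x - a) ^ 2 - y ^ 2 := by linarith
    have key : (b - a) * ((x ^ 2 - y ^ 2 - 1) ^ 2 + (2 * x * y) ^ 2 - 1) =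
        -2 * (b - x) ^ 2 * (a * (2 * a ^ 2 - 2 * b * a + 1)) -
          2 * (b - x) * (x + b - 2 * a) * (3 * a - 2 * b) -
          (b - a) * ((b - a) ^ 2 - (x - a) ^ 2 - y ^ 2) *
            (2 * (x ^ 2 + y ^ 2) + ((b - a) ^ 2 - (x - a) ^ 2 - y ^ 2) + 2) := by
      linear_combination (b ^ 3 - 5 * a * b ^ 2 + 4 * a ^ 2 * b + 4 * x * a * b -
        4 * x * a ^ 2) * hb
    have hpos : 0 < 2 * (x ^ 2 + y ^ 2) + ((b - a) ^ 2 - (x - a) ^ 2 - y ^ 2) + 2 := by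
      nlinarith [sq_nonneg x, sq_nonneg y]
    have t1 : 0 ≤ 2 * (b - x) ^ 2 * (a * (2 * a ^ 2 - 2 * b * a + 1)) :=
      mul_nonneg (by positivity) hlow
    have t2 : 0 ≤ 2 * (b - x) * (x + b - 2 * a) * (3 * a - 2 * b) :=
      mul_nonneg (mul_nonneg (by linarith) (by linarith)) hhi
    have t3 : 0 < (b - a) * ((b - a) ^ 2 - (x - a) ^ 2 - y ^ 2) *
        (2 * (x ^ 2 + y ^ 2) + ((b - a) ^ 2 - (x - a) ^ 2 - y ^ 2) + 2) :=
      mul_pos (mul_pos hba hD) hpos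
    nlinarith [key, t1, t2, t3, hba]
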